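/- Subject reduction for strong field update: assume ρ,h,A ⊨ (Γ,Δ,Θ), ρ(x) = l_x ∈ dom(h), Γ(x) = n ∈ Θ. Then ρ, h[(l_x,f) ↦ ρ(y)], A ⊨ (Γ, Δ[(n,f) ↦ Γ(y)], Θ). -/

import Mathlib

namespace SecureClones

abbrev Var := ℕ
abbrev Field := ℕ
abbrev Loc := ℕ
abbrev PolId := ℕ
abbrev Node := ℕ

/-- Values: locations or null. -/
inductive Val where
  | loc : Loc → Val
  | null : Val
deriving DecidableEq

abbrev Obj := Field → Val
abbrev Heap := Loc → Option Obj
abbrev Env := Var → Val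

/-- An access path: a root variable followed by a sequence of fields. -/
structure Path where
  root : Var
  fields : List Field
deriving DecidableEq

/-- Evaluation of a sequence of field dereferences from a value. -/
def evalFields (h : Heap) : Val → List Field → Option Val
  | v, [] => some v
  | Val.loc l, f :: fs =>
      match h l with
      | some o => evalFields h (o f) fs
      | none => none
  | Val.null, _ :: _ => none

/-- Concrete path evaluation ⟨ρ,h⟩π ⇓ v. -/
def EvalPath (ρ : Env) (h : Heap) (π : Path) (v : Val) : Prop :=
  evalFields h (ρ π.root) π.fields = some v

/-- Reachability in a heap: `Reach h v w` iff `w` is reachable from `v`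
by a (possibly empty) sequence of field dereferences. -/
inductive Reach (h : Heap) : Val → Val → Prop
  | refl (v) : Reach h v v
  | step {v : Val} {l : Loc} {o : Obj} (f : Field) :
      Reach h v (Val.loc l) → h l = some o → Reach h v (o f)

/-- A copy policy: a set of (policy identifier, deep field) pairs. -/
abbrev Pol := Set (PolId × Field)

/-- A field sequence follows only deep fields of a policy (w.r.t. policy map `Pm`). -/
inductive FieldsSat (Pm : PolId → Pol) : Pol → List Field → Prop
  | nil (τ) : FieldsSat Pm τ []
  | cons {τ : Pol} {fs : List Field} (X : PolId) (f : Field) :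
      (X, f) ∈ τ → FieldsSat Pm (Pm X) fs → FieldsSat Pm τ (f :: fs)

/-- ⊢ π : τ : the access path follows only deep fields of τ. -/
def PathSat (Pm : PolId → Pol) (π : Path) (τ : Pol) : Prop :=
  FieldsSat Pm τ π.fields

/-- Policy semantics ρ,h,x ⊨ τ. -/
def PolSem (Pm : PolId → Pol) (ρ : Env) (h : Heap) (x : Var) (τ : Pol) : Prop :=
  ∀ (π π' : Path) (l l' : Loc),
    π.root = x → π'.root ≠ x →
    PathSat Pm π τ →
    EvalPath ρ h π (Val.loc l) → EvalPath ρ h π' (Val.loc l') →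
    l ≠ l'

/-- Base types of the type-and-effect system. -/
inductive BaseType where
  | node : Node → BaseType
  | bot
  | topOut
  | top
deriving DecidableEq

abbrev Graph := Node → Option (Field → BaseType)

/-- A type (Γ,Δ,Θ). -/
structure Ty where
  Γ : Var → BaseType
  Δ : Graph
  Θ : Set Node

/-- Abstract evaluation of a field sequence from a base type, with ⊤, ⊤out as sinks. -/
def aevalFields (Δ : Graph) : BaseType → List Field → Option BaseType
  | t, [] => some t
  | BaseType.node n, f :: fs =>
      match Δ n with
      | some e => aevalFields Δ (e f) fs
      | none => none
  | BaseType.top, _ :: _ => some BaseType.top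
  | BaseType.topOut, _ :: _ => some BaseType.topOut
  | BaseType.bot, _ :: _ => none

/-- Abstract path evaluation [Γ,Δ]π ⇓ t. -/
def AEval (Γ : Var → BaseType) (Δ : Graph) (π : Path) (t : BaseType) : Prop :=
  aevalFields Δ (Γ π.root) π.fields = some t

/-- Auxiliary type interpretation [[v : t]]. -/
inductive AuxInterp (ρ : Env) (h : Heap) (A : Set Loc) (Γ : Var → BaseType) (Δ : Graph) :
    Val → BaseType → Prop
  | null (t) : AuxInterp ρ h A Γ Δ Val.null t
  | top (v) : AuxInterp ρ h A Γ Δ v BaseType.top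
  | topOut (l : Loc) :
      (∀ l' : Loc, Reach h (Val.loc l) (Val.loc l') → l' ∉ A) →
      AuxInterp ρ h A Γ Δ (Val.loc l) BaseType.topOut
  | node (l : Loc) (n : Node) :
      l ∈ A → (Δ n).isSome →
      (∀ π, EvalPath ρ h π (Val.loc l) → AEval Γ Δ π (BaseType.node n)) →
      AuxInterp ρ h A Γ Δ (Val.loc l) (BaseType.node n)

/-- Main type interpretation ρ,h,A ⊨ (Γ,Δ,Θ). -/
structure Interp (ρ : Env) (h : Heap) (A : Set Loc) (T : Ty) : Prop where
  paths : ∀ (π : Path) (t : BaseType) (v : Val),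
    AEval T.Γ T.Δ π t → EvalPath ρ h π v → AuxInterp ρ h A T.Γ T.Δ v t
  strong : ∀ n ∈ T.Θ, ∀ (π π' : Path) (l l' : Loc),
    AEval T.Γ T.Δ π (BaseType.node n) → AEval T.Γ T.Δ π' (BaseType.node n) →
    EvalPath ρ h π (Val.loc l) → EvalPath ρ h π' (Val.loc l') → l = l'

/-- Value sub-typing t ≤_σ t' (σ : Node → Option Node, none standing for ⊤). -/
inductive VSub (σ : Node → Option Node) : BaseType → BaseType → Prop
  | bot (t) : VSub σ BaseType.bot t
  | top {t : BaseType} : (∀ n, t ≠ BaseType.node n) → VSub σ t BaseType.top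
  | topOut : VSub σ BaseType.topOut BaseType.topOut
  | node {n n' : Node} : σ n = some n' → VSub σ (BaseType.node n) (BaseType.node n')
  | nodeTop {n : Node} : σ n = none → VSub σ (BaseType.node n) BaseType.top

/-- T₁ ⊑ T₂ via the fusion map σ. -/
structure SubtypeVia (T₁ T₂ : Ty) (σ : Node → Option Node) : Prop where
  st1 : ∀ n n', (T₁.Δ n).isSome → σ n = some n' → (T₂.Δ n').isSome
  st2 : ∀ (t₁ : BaseType) (π : Path), AEval T₁.Γ T₁.Δ π t₁ →
      ∃ t₂, VSub σ t₁ t₂ ∧ AEval T₂.Γ T₂.Δ π t₂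
  st3 : ∀ n₂ ∈ T₂.Θ, ∃ n₁ ∈ T₁.Θ,
      ∀ n, ((T₁.Δ n).isSome ∧ σ n = some n₂) ↔ n = n₁

/-- The sub-typing relation T₁ ⊑ T₂. -/
def TySub (T₁ T₂ : Ty) : Prop := ∃ σ, SubtypeVia T₁ T₂ σ

-- Successor base type of a policy node for field f: the node of the policy
-- governing f if f is deep, and ⊤ otherwise.
open Classical in
noncomputable def polEdge (τ : Pol) (f : Field) : BaseType :=
  if h : ∃ X, (X, f) ∈ τ then BaseType.node (h.choose + 1) else BaseType.top

/-- The graph part of Φ(τ): node 0 is the unfolded root n_τ, node X+1 is the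
node n'_X of policy identifier X. -/
noncomputable def PhiGraph (Pm : PolId → Pol) (τ : Pol) : Graph :=
  fun n =>
    match n with
    | 0 => some (polEdge τ)
    | m + 1 => some (polEdge (Pm m))

/-- The root node n_τ of Φ(τ). -/
def PhiRoot : Node := 0

/-- Heap update h[(l,f) ↦ v]. -/
def hupd (h : Heap) (l : Loc) (f : Field) (v : Val) : Heap :=
  fun l' => if l' = l then (h l).map (fun o => Function.update o f v) else h l'

/-- Graph update Δ[(n,f) ↦ t]. -/
def gupd (Δ : Graph) (n : Node) (f : Field) (t : BaseType) : Graph :=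
  fun m => if m = n then (Δ n).map (fun e => Function.update e f t) else Δ m


lemma evalFields_cons_some (h : Heap) {l : Loc} {o : Obj} (ho : h l = some o)
    (g : Field) (gs : List Field) :
    evalFields h (Val.loc l) (g :: gs) = evalFields h (o g) gs := by
  simp [evalFields, ho]

lemma aevalFields_top (Δ : Graph) (fs : List Field) :
    aevalFields Δ BaseType.top fs = some BaseType.top := by
  cases fs <;> simp [aevalFields]

lemma aevalFields_topOut (Δ : Graph) (fs : List Field) :
    aevalFields Δ BaseType.topOut fs = some BaseType.topOut := by
  cases fs <;> simp [aevalFields]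

lemma aevalFields_node_some (Δ : Graph) {m : Node} {e : Field → BaseType}
    (he : Δ m = some e) (g : Field) (gs : List Field) :
    aevalFields Δ (BaseType.node m) (g :: gs) = aevalFields Δ (e g) gs := by
  simp [aevalFields, he]

lemma evalFields_append (h : Heap) (fs gs : List Field) :
    ∀ v, evalFields h v (fs ++ gs)
      = (evalFields h v fs).bind fun w => evalFields h w gs := by
  induction fs with
  | nil => intro v; simp [evalFields]
  | cons g fs ih =>
    intro v
    cases v with
    | null => simp [evalFields]
    | loc l =>
      cases hl : h l with
      | none => simp [evalFields, hl]
      | some o => simp [evalFields, hl, ih]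

lemma aevalFields_append (Δ : Graph) (fs gs : List Field) :
    ∀ t, aevalFields Δ t (fs ++ gs)
      = (aevalFields Δ t fs).bind fun s => aevalFields Δ s gs := by
  induction fs with
  | nil => intro t; simp [aevalFields]
  | cons g fs ih =>
    intro t
    cases t with
    | bot => simp [aevalFields]
    | top => simp [aevalFields, aevalFields_top]
    | topOut => simp [aevalFields, aevalFields_topOut]
    | node m =>
      cases hm : Δ m with
      | none => simp [aevalFields, hm]
      | some e => simp [aevalFields, hm, ih]

/-- Subject reduction for strong field update x.f := y. -/
theorem subject_reduction_strong_update
    (ρ : Env) (h : Heap) (A : Set Loc) (Γ : Var → BaseType) (Δ : Graph) (Θ : Set Node)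
    (x y : Var) (lx : Loc) (n : Node) (f : Field)
    (hint : Interp ρ h A ⟨Γ, Δ, Θ⟩)
    (hx : ρ x = Val.loc lx) (hdom : (h lx).isSome)
    (hΓx : Γ x = BaseType.node n) (hstrong : n ∈ Θ) :
    Interp ρ (hupd h lx f (ρ y)) A ⟨Γ, gupd Δ n f (Γ y), Θ⟩ := by
  classical
  obtain ⟨ox, hox⟩ : ∃ o, h lx = some o := Option.isSome_iff_exists.mp hdom
  set h' : Heap := hupd h lx f (ρ y) with hh'def
  set Δ' : Graph := gupd Δ n f (Γ y) with hΔ'def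
  have hh'ne : ∀ l : Loc, l ≠ lx → h' l = h l := by
    intro l hl; simp [hh'def, hupd, hl]
  have hh'lx : h' lx = some (Function.update ox f (ρ y)) := by
    simp [hh'def, hupd, hox]
  have hΔ'ne : ∀ m : Node, m ≠ n → Δ' m = Δ m := by
    intro m hm; simp [hΔ'def, gupd, hm]
  have hax0 : AEval Γ Δ ⟨x, []⟩ (BaseType.node n) := by
    simp [AEval, aevalFields, hΓx]
  have hex0 : EvalPath ρ h ⟨x, []⟩ (Val.loc lx) := by
    simp [EvalPath, evalFields, hx]
  have hlxfacts : lx ∈ A ∧ (Δ n).isSome ∧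
      ∀ π, EvalPath ρ h π (Val.loc lx) → AEval Γ Δ π (BaseType.node n) := by
    have h0 := hint.paths ⟨x, []⟩ (BaseType.node n) (Val.loc lx) hax0 hex0
    cases h0 with
    | node l m h1 h2 h3 => exact ⟨h1, h2, h3⟩
  have hL1 : ∀ (π : Path) (t : BaseType),
      EvalPath ρ h π (Val.loc lx) → AEval Γ Δ π t → t = BaseType.node n := by
    intro π t he ha
    have h1 := hlxfacts.2.2 π he
    have ha' : aevalFields Δ (Γ π.root) π.fields = some t := ha
    have h1' : aevalFields Δ (Γ π.root) π.fields = some (BaseType.node n) := h1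
    exact Option.some.inj (ha'.symm.trans h1')
  have hL2 : ∀ (π : Path) (l : Loc),
      AEval Γ Δ π (BaseType.node n) → EvalPath ρ h π (Val.loc l) → l = lx :=
    fun π l ha he => hint.strong n hstrong π ⟨x, []⟩ l lx ha hax0 he hex0
  have hAux : ∀ v t, (∃ π, EvalPath ρ h π v ∧ AEval Γ Δ π t) →
      AuxInterp ρ h A Γ Δ v t := by
    rintro v t ⟨π, he, ha⟩; exact hint.paths π t v ha he
  have hL4 : ∀ l : Loc,
      ¬ ∃ π, EvalPath ρ h π (Val.loc l) ∧ AEval Γ Δ π BaseType.bot := by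
    intro l hr
    have h0 := hAux _ _ hr
    cases h0
  have hstep : ∀ (π : Path) (l : Loc) (o : Obj) (g : Field) (t t' : BaseType),
      EvalPath ρ h π (Val.loc l) → AEval Γ Δ π t → h l = some o →
      aevalFields Δ t [g] = some t' →
      ∃ π', EvalPath ρ h π' (o g) ∧ AEval Γ Δ π' t' := by
    intro π l o g t t' he ha ho hstep1
    have he' : evalFields h (ρ π.root) π.fields = some (Val.loc l) := he
    have ha' : aevalFields Δ (Γ π.root) π.fields = some t := ha
    refine ⟨⟨π.root, π.fields ++ [g]⟩, ?_, ?_⟩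
    · show evalFields h (ρ π.root) (π.fields ++ [g]) = some (o g)
      rw [evalFields_append, he']
      show evalFields h (Val.loc l) [g] = some (o g)
      rw [evalFields_cons_some h ho]
      simp [evalFields]
    · show aevalFields Δ (Γ π.root) (π.fields ++ [g]) = some t'
      rw [aevalFields_append, ha']
      exact hstep1
  have key : ∀ (fs : List Field) (v : Val) (t : BaseType),
      (∃ π, EvalPath ρ h π v ∧ AEval Γ Δ π t) →
      ∀ w, evalFields h' v fs = some w →
      ∃ u, aevalFields Δ' t fs = some u ∧
        ∃ π, EvalPath ρ h π w ∧ AEval Γ Δ π u := by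
    intro fs
    induction fs with
    | nil =>
      intro v t hR w hw
      have hv : v = w := by simpa [evalFields] using hw
      exact ⟨t, by simp [aevalFields], hv ▸ hR⟩
    | cons g gs ih =>
      intro v t hR w hw
      cases v with
      | null => exact absurd hw (by simp [evalFields])
      | loc l =>
        cases hhl : h' l with
        | none =>
          rw [show evalFields h' (Val.loc l) (g :: gs)
              = (match h' l with
                 | some o => evalFields h' (o g) gs
                 | none => none) from rfl, hhl] at hw
          exact absurd hw (by simp)
        | some o' =>
          have hw' : evalFields h' (o' g) gs = some w := by
            rw [evalFields_cons_some h' hhl] at hw; exact hw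
          have hlo : ∃ o, h l = some o ∧
              o' g = (if l = lx ∧ g = f then ρ y else o g) := by
            by_cases hl : l = lx
            · subst hl
              refine ⟨ox, hox, ?_⟩
              have ho' : o' = Function.update ox f (ρ y) := by
                rw [hh'lx] at hhl; exact (Option.some.inj hhl).symm
              rw [ho']
              by_cases hg : g = f
              · subst hg; simp
              · simp [hg, Function.update_of_ne hg]
            · refine ⟨o', ?_, ?_⟩
              · rw [← hh'ne l hl]; exact hhl
              · simp [hl]
          obtain ⟨o, holo, ho'g⟩ := hlo
          cases t with
          | bot => exact absurd hR (hL4 l)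
          | top =>
            have hcr : ¬ (l = lx ∧ g = f) := by
              rintro ⟨hl, -⟩
              obtain ⟨π, he, ha⟩ := hR
              have h0 := hL1 π BaseType.top (hl ▸ he) ha
              exact absurd h0 (by simp)
            have ho'g' : o' g = o g := by rw [ho'g, if_neg hcr]
            obtain ⟨π, he, ha⟩ := hR
            have hR' := hstep π l o g BaseType.top BaseType.top he ha holo (aevalFields_top Δ [g])
            obtain ⟨u, hu, hRu⟩ := ih (o g) BaseType.top hR' w (ho'g' ▸ hw')
            have hutop : u = BaseType.top :=
              (Option.some.inj ((aevalFields_top Δ' gs).symm.trans hu)).symm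
            exact ⟨BaseType.top, aevalFields_top Δ' (g :: gs), hutop ▸ hRu⟩
          | topOut =>
            have hcr : ¬ (l = lx ∧ g = f) := by
              rintro ⟨hl, -⟩
              obtain ⟨π, he, ha⟩ := hR
              have h0 := hL1 π BaseType.topOut (hl ▸ he) ha
              exact absurd h0 (by simp)
            have ho'g' : o' g = o g := by rw [ho'g, if_neg hcr]
            obtain ⟨π, he, ha⟩ := hR
            have hR' := hstep π l o g BaseType.topOut BaseType.topOut he ha holo (aevalFields_topOut Δ [g])
            obtain ⟨u, hu, hRu⟩ := ih (o g) BaseType.topOut hR' w (ho'g' ▸ hw')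
            have hutop : u = BaseType.topOut :=
              (Option.some.inj ((aevalFields_topOut Δ' gs).symm.trans hu)).symm
            exact ⟨BaseType.topOut, aevalFields_topOut Δ' (g :: gs), hutop ▸ hRu⟩
          | node m =>
            have hAx := hAux _ _ hR
            cases hAx with
            | node l' m' hlA hΔm hallm =>
              obtain ⟨e, hΔme⟩ := Option.isSome_iff_exists.mp hΔm
              have hiff1 : l = lx → m = n := by
                intro hl
                obtain ⟨π, he, ha⟩ := hR
                have h0 := hL1 π (BaseType.node m) (hl ▸ he) ha
                injection h0
              have hiff2 : m = n → l = lx := by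
                intro hm
                obtain ⟨π, he, ha⟩ := hR
                exact hL2 π l (hm ▸ ha) he
              have hΔ'm : ∃ e', Δ' m = some e' ∧
                  e' g = (if m = n ∧ g = f then Γ y else e g) := by
                by_cases hm : m = n
                · subst hm
                  refine ⟨Function.update e f (Γ y), ?_, ?_⟩
                  · simp [hΔ'def, gupd, hΔme]
                  · by_cases hg : g = f
                    · subst hg; simp
                    · simp [hg, Function.update_of_ne hg]
                · exact ⟨e, by rw [hΔ'ne m hm]; exact hΔme, by simp [hm]⟩
              obtain ⟨e', hΔ'me, he'g⟩ := hΔ'm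
              by_cases hc : l = lx ∧ g = f
              · have hmn : m = n := hiff1 hc.1
                have habs : e' g = Γ y := by rw [he'g, if_pos ⟨hmn, hc.2⟩]
                have hcon : o' g = ρ y := by rw [ho'g, if_pos hc]
                have hRy : ∃ π, EvalPath ρ h π (ρ y) ∧ AEval Γ Δ π (Γ y) :=
                  ⟨⟨y, []⟩, by simp [EvalPath, evalFields], by simp [AEval, aevalFields]⟩
                obtain ⟨u, hu, hRu⟩ := ih (ρ y) (Γ y) hRy w (hcon ▸ hw')
                exact ⟨u, by rw [aevalFields_node_some Δ' hΔ'me, habs]; exact hu, hRu⟩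
              · have hnc : ¬ (m = n ∧ g = f) := fun hq => hc ⟨hiff2 hq.1, hq.2⟩
                have habs : e' g = e g := by rw [he'g, if_neg hnc]
                have hcon : o' g = o g := by rw [ho'g, if_neg hc]
                obtain ⟨π, he, ha⟩ := hR
                have hR' := hstep π l o g (BaseType.node m) (e g) he ha holo
                  (by rw [aevalFields_node_some Δ hΔme]; simp [aevalFields])
                obtain ⟨u, hu, hRu⟩ := ih (o g) (e g) hR' w (hcon ▸ hw')
                exact ⟨u, by rw [aevalFields_node_some Δ' hΔ'me, habs]; exact hu, hRu⟩
  have reachlem : ∀ v w, Reach h' v w → ¬ Reach h v (Val.loc lx) → Reach h v w := by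
    intro v w hr
    induction hr with
    | refl => exact fun _ => Reach.refl _
    | step f₀ hr0 hl0 ih =>
      rename_i l₀ o₀
      intro hn
      have hv := ih hn
      have hne : l₀ ≠ lx := fun hq => hn (hq ▸ hv)
      have hh : h l₀ = some o₀ := by rw [← hh'ne l₀ hne]; exact hl0
      exact Reach.step f₀ hv hh
  refine ⟨?_, ?_⟩
  · intro π t v haev hev
    have hR0 : ∃ π0, EvalPath ρ h π0 (ρ π.root) ∧ AEval Γ Δ π0 (Γ π.root) :=
      ⟨⟨π.root, []⟩, by simp [EvalPath, evalFields], by simp [AEval, aevalFields]⟩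
    have hev' : evalFields h' (ρ π.root) π.fields = some v := hev
    obtain ⟨u, hu, hRu⟩ := key π.fields (ρ π.root) (Γ π.root) hR0 v hev'
    have haev' : aevalFields Δ' (Γ π.root) π.fields = some t := haev
    have hut : u = t := Option.some.inj (hu.symm.trans haev')
    subst hut
    cases v with
    | null => exact AuxInterp.null u
    | loc l =>
      cases u with
      | bot => exact absurd hRu (hL4 l)
      | top => exact AuxInterp.top _
      | topOut =>
        have hAx := hAux _ _ hRu
        cases hAx with
        | topOut l0 hsafe =>
          refine AuxInterp.topOut l ?_
          intro l' hr'
          have hnlx : ¬ Reach h (Val.loc l) (Val.loc lx) :=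
            fun hq => hsafe lx hq hlxfacts.1
          exact hsafe l' (reachlem _ _ hr' hnlx)
      | node m =>
        have hAx := hAux _ _ hRu
        cases hAx with
        | node l0 m0 hlA hΔm hallm =>
          refine AuxInterp.node l m hlA ?_ ?_
          · by_cases hm : m = n
            · subst hm
              obtain ⟨e, he⟩ := Option.isSome_iff_exists.mp hΔm
              simp [hΔ'def, gupd, he]
            · show (Δ' m).isSome = true
              rw [hΔ'ne m hm]; exact hΔm
          · intro π' hev''
            have hR0' : ∃ π0, EvalPath ρ h π0 (ρ π'.root) ∧ AEval Γ Δ π0 (Γ π'.root) :=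
              ⟨⟨π'.root, []⟩, by simp [EvalPath, evalFields], by simp [AEval, aevalFields]⟩
            have hev''' : evalFields h' (ρ π'.root) π'.fields = some (Val.loc l) := hev''
            obtain ⟨u', hu', hRu'⟩ := key π'.fields (ρ π'.root) (Γ π'.root) hR0' (Val.loc l) hev'''
            obtain ⟨πc, hec, hac⟩ := hRu'
            have hcm := hallm πc hec
            have hac' : aevalFields Δ (Γ πc.root) πc.fields = some u' := hac
            have hcm' : aevalFields Δ (Γ πc.root) πc.fields = some (BaseType.node m) := hcm
            have hcan : u' = BaseType.node m := Option.some.inj (hac'.symm.trans hcm')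
            show aevalFields Δ' (Γ π'.root) π'.fields = some (BaseType.node m)
            rw [hu', hcan]
  · intro m hm π π' l l' ha ha' he he'
    have hR0 : ∃ π0, EvalPath ρ h π0 (ρ π.root) ∧ AEval Γ Δ π0 (Γ π.root) :=
      ⟨⟨π.root, []⟩, by simp [EvalPath, evalFields], by simp [AEval, aevalFields]⟩
    have hR0' : ∃ π0, EvalPath ρ h π0 (ρ π'.root) ∧ AEval Γ Δ π0 (Γ π'.root) :=
      ⟨⟨π'.root, []⟩, by simp [EvalPath, evalFields], by simp [AEval, aevalFields]⟩
    have he1 : evalFields h' (ρ π.root) π.fields = some (Val.loc l) := he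
    have he2 : evalFields h' (ρ π'.root) π'.fields = some (Val.loc l') := he'
    obtain ⟨u, hu, hRu⟩ := key π.fields (ρ π.root) (Γ π.root) hR0 (Val.loc l) he1
    obtain ⟨u', hu', hRu'⟩ := key π'.fields (ρ π'.root) (Γ π'.root) hR0' (Val.loc l') he2
    have ha1 : aevalFields Δ' (Γ π.root) π.fields = some (BaseType.node m) := ha
    have ha2 : aevalFields Δ' (Γ π'.root) π'.fields = some (BaseType.node m) := ha'
    have hum : u = BaseType.node m := Option.some.inj (hu.symm.trans ha1)
    have hum' : u' = BaseType.node m := Option.some.inj (hu'.symm.trans ha2)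
    subst hum; subst hum'
    obtain ⟨πa, hea, haa⟩ := hRu
    obtain ⟨πb, heb, hab⟩ := hRu'
    exact hint.strong m hm πa πb l l' haa hab hea heb

end SecureClones
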